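/- For every k ≥ 1, the polynomial F_k ∈ ℂ[z_0,z_1,z_2,z_3] is invariant under every element of W, under ν, and under τ (hence under the group W̃ generated by W, ν and τ). -/

import Mathlib

open MvPolynomial

/-- The symmetric invariants `F_k = (1/6) Σ_{i<j} [(z_i - z_j)^{2k} + (z_i + z_j)^{2k}]`. -/
noncomputable def Fpoly (k : ℕ) : MvPolynomial (Fin 4) ℂ :=
  C (6⁻¹ : ℂ) *
    ∑ i : Fin 4, ∑ j : Fin 4,
      if i < j then (X i - X j) ^ (2 * k) + (X i + X j) ^ (2 * k) else 0

/-- The group `W` of even-signed permutations of coordinates, as a set of matrices: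
matrices of the maps `e_i ↦ ε_i e_{s(i)}` with `s ∈ S₄`, `ε_i = ±1`, `ε₀ε₁ε₂ε₃ = 1`. -/
def SignedPerm : Set (Matrix (Fin 4) (Fin 4) ℂ) :=
  { M | ∃ (s : Equiv.Perm (Fin 4)) (ε : Fin 4 → ℂ),
      (∀ i, ε i = 1 ∨ ε i = -1) ∧ ε 0 * ε 1 * ε 2 * ε 3 = 1 ∧
      ∀ i j, M i j = if i = s j then ε j else 0 }

/-- The matrix `ν = diag(1,1,1,-1)`. -/
noncomputable def nuMat : Matrix (Fin 4) (Fin 4) ℂ :=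
  Matrix.diagonal ![1, 1, 1, -1]

/-- The matrix `τ`. -/
noncomputable def tauMat : Matrix (Fin 4) (Fin 4) ℂ :=
  (2⁻¹ : ℂ) • Matrix.of
    ![![1, 1, 1, 1], ![1, 1, -1, -1], ![1, -1, -1, 1], ![1, -1, 1, -1]]

/-- A polynomial `f` is invariant under the linear map with matrix `M` if `f ∘ M = f`,
equivalently (over the infinite field `ℂ`) `f (M z) = f z` for all `z`. -/
def InvUnder (M : Matrix (Fin 4) (Fin 4) ℂ) (f : MvPolynomial (Fin 4) ℂ) : Prop :=
  ∀ z : Fin 4 → ℂ, eval (M.mulVec z) f = eval z f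

/-- The group `W̃`: the subgroup of `GL(4, ℂ)` generated by `W`, `ν` and `τ`. -/
noncomputable def tildeW : Subgroup (GL (Fin 4) ℂ) :=
  Subgroup.closure
    { g : GL (Fin 4) ℂ | (↑g : Matrix (Fin 4) (Fin 4) ℂ) ∈ SignedPerm ∨
        (↑g : Matrix (Fin 4) (Fin 4) ℂ) = nuMat ∨ (↑g : Matrix (Fin 4) (Fin 4) ℂ) = tauMat }

/-! ### Auxiliary lemmas -/

/-- The basic building block `T k a b = (a-b)^(2k) + (a+b)^(2k)`. -/
noncomputable def Tpair (k : ℕ) (a b : ℂ) : ℂ := (a - b) ^ (2*k) + (a + b) ^ (2*k)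

lemma hsub (k : ℕ) (a b : ℂ) : (a - b) ^ (2*k) = (b - a) ^ (2*k) := by
  rw [← neg_sub b a, Even.neg_pow (even_two_mul k)]

lemma Tsymm (k : ℕ) (a b : ℂ) : Tpair k a b = Tpair k b a := by
  unfold Tpair; rw [hsub k a b, add_comm a b]

lemma Tneg_right (k : ℕ) (a b : ℂ) : Tpair k a (-b) = Tpair k a b := by
  unfold Tpair; rw [sub_neg_eq_add, ← sub_eq_add_neg, add_comm ((a-b)^(2*k))]

lemma Tneg_left (k : ℕ) (a b : ℂ) : Tpair k (-a) b = Tpair k a b := by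
  rw [Tsymm, ← Tneg_right, Tsymm, neg_neg]

lemma Tsign (k : ℕ) {e e' : ℂ} (he : e = 1 ∨ e = -1) (he' : e' = 1 ∨ e' = -1)
    (a b : ℂ) : Tpair k (e * a) (e' * b) = Tpair k a b := by
  rcases he with h | h <;> rcases he' with h' | h' <;>
    simp [h, h', neg_one_mul, Tneg_left, Tneg_right]

lemma evalF (k : ℕ) (z : Fin 4 → ℂ) : eval z (Fpoly k) =
    6⁻¹ * ∑ i : Fin 4, ∑ j : Fin 4, if i < j then Tpair k (z i) (z j) else 0 := by
  simp [Fpoly, Tpair, apply_ite (eval z)]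

lemma half_pairs (g : Fin 4 → Fin 4 → ℂ) (hg : ∀ i j, g i j = g j i) :
    (∑ i : Fin 4, ∑ j : Fin 4, if i < j then g i j else 0)
      = (2:ℂ)⁻¹ * ((∑ i : Fin 4, ∑ j : Fin 4, g i j) - ∑ i : Fin 4, g i i) := by
  simp only [Fin.sum_univ_four]
  simp (config := { decide := true }) only [if_true, if_false, ite_true, ite_false]
  linear_combination (2:ℂ)⁻¹ * (hg 0 1 + hg 0 2 + hg 0 3 + hg 1 2 + hg 1 3 + hg 2 3)

lemma evalF6 (k : ℕ) (z : Fin 4 → ℂ) : eval z (Fpoly k) =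
    6⁻¹ * (Tpair k (z 0) (z 1) + Tpair k (z 0) (z 2) + Tpair k (z 0) (z 3)
      + Tpair k (z 1) (z 2) + Tpair k (z 1) (z 3) + Tpair k (z 2) (z 3)) := by
  rw [evalF]; congr 1
  simp only [Fin.sum_univ_four]
  simp (config := { decide := true }) only [if_true, if_false, ite_true, ite_false]
  ring

lemma inv_signed (k : ℕ) : ∀ M ∈ SignedPerm, InvUnder M (Fpoly k) := by
  rintro M ⟨s, ε, hε, -, hM⟩ z
  have hw : ∀ i, M.mulVec z i = ε (s.symm i) * z (s.symm i) := by
    intro i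
    simp only [Matrix.mulVec, dotProduct, hM, ite_mul, zero_mul]
    rw [Finset.sum_eq_single (s.symm i)]
    · simp
    · intro j _ hj
      rw [if_neg]
      intro h
      exact hj (by rw [h, Equiv.symm_apply_apply])
    · simp
  rw [evalF, evalF, half_pairs _ (fun i j => Tsymm k _ _),
    half_pairs _ (fun i j => Tsymm k _ _)]
  have key : ∀ i j, Tpair k (M.mulVec z i) (M.mulVec z j)
      = Tpair k (z (s.symm i)) (z (s.symm j)) := by
    intro i j; rw [hw, hw, Tsign k (hε _) (hε _)]
  have h1 : (∑ i : Fin 4, ∑ j : Fin 4, Tpair k (M.mulVec z i) (M.mulVec z j))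
      = ∑ i : Fin 4, ∑ j : Fin 4, Tpair k (z i) (z j) := by
    simp_rw [key]
    rw [← Equiv.sum_comp s.symm (fun i => ∑ j : Fin 4, Tpair k (z i) (z j))]
    exact Finset.sum_congr rfl fun i _ =>
      (Equiv.sum_comp s.symm (fun j => Tpair k (z (s.symm i)) (z j)))
  have h2 : (∑ i : Fin 4, Tpair k (M.mulVec z i) (M.mulVec z i))
      = ∑ i : Fin 4, Tpair k (z i) (z i) := by
    simp_rw [key]
    exact Equiv.sum_comp s.symm (fun i => Tpair k (z i) (z i))
  rw [h1, h2]

lemma inv_nu (k : ℕ) : InvUnder nuMat (Fpoly k) := by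
  intro z
  have hw : ∀ i, nuMat.mulVec z i = ![1,1,1,-1] i * z i := fun i => by
    simp [nuMat, Matrix.mulVec_diagonal]
  rw [evalF6, evalF6, hw 0, hw 1, hw 2, hw 3]
  norm_num [neg_one_mul, Tneg_right, Matrix.cons_val_two, Matrix.cons_val_three]

lemma inv_tau (k : ℕ) : InvUnder tauMat (Fpoly k) := by
  intro z
  have h0 : tauMat.mulVec z 0 = 2⁻¹ * (z 0 + z 1 + z 2 + z 3) := by
    simp [tauMat, Matrix.mulVec, dotProduct, Fin.sum_univ_four]; ring
  have h1 : tauMat.mulVec z 1 = 2⁻¹ * (z 0 + z 1 - z 2 - z 3) := by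
    simp [tauMat, Matrix.mulVec, dotProduct, Fin.sum_univ_four]; ring
  have h2 : tauMat.mulVec z 2 = 2⁻¹ * (z 0 - z 1 - z 2 + z 3) := by
    simp [tauMat, Matrix.mulVec, dotProduct, Fin.sum_univ_four]; ring
  have h3 : tauMat.mulVec z 3 = 2⁻¹ * (z 0 - z 1 + z 2 - z 3) := by
    simp [tauMat, Matrix.mulVec, dotProduct, Fin.sum_univ_four]; ring
  rw [evalF6, evalF6, h0, h1, h2, h3]
  simp only [Tpair]
  rw [show 2⁻¹ * (z 0 + z 1 + z 2 + z 3) - 2⁻¹ * (z 0 + z 1 - z 2 - z 3) = z 2 + z 3 by ring,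
    show 2⁻¹ * (z 0 + z 1 + z 2 + z 3) + 2⁻¹ * (z 0 + z 1 - z 2 - z 3) = z 0 + z 1 by ring,
    show 2⁻¹ * (z 0 + z 1 + z 2 + z 3) - 2⁻¹ * (z 0 - z 1 - z 2 + z 3) = z 1 + z 2 by ring,
    show 2⁻¹ * (z 0 + z 1 + z 2 + z 3) + 2⁻¹ * (z 0 - z 1 - z 2 + z 3) = z 0 + z 3 by ring,
    show 2⁻¹ * (z 0 + z 1 + z 2 + z 3) - 2⁻¹ * (z 0 - z 1 + z 2 - z 3) = z 1 + z 3 by ring,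
    show 2⁻¹ * (z 0 + z 1 + z 2 + z 3) + 2⁻¹ * (z 0 - z 1 + z 2 - z 3) = z 0 + z 2 by ring,
    show 2⁻¹ * (z 0 + z 1 - z 2 - z 3) - 2⁻¹ * (z 0 - z 1 - z 2 + z 3) = z 1 - z 3 by ring,
    show 2⁻¹ * (z 0 + z 1 - z 2 - z 3) + 2⁻¹ * (z 0 - z 1 - z 2 + z 3) = z 0 - z 2 by ring,
    show 2⁻¹ * (z 0 + z 1 - z 2 - z 3) - 2⁻¹ * (z 0 - z 1 + z 2 - z 3) = z 1 - z 2 by ring,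
    show 2⁻¹ * (z 0 + z 1 - z 2 - z 3) + 2⁻¹ * (z 0 - z 1 + z 2 - z 3) = z 0 - z 3 by ring,
    show 2⁻¹ * (z 0 - z 1 - z 2 + z 3) - 2⁻¹ * (z 0 - z 1 + z 2 - z 3) = z 3 - z 2 by ring,
    show 2⁻¹ * (z 0 - z 1 - z 2 + z 3) + 2⁻¹ * (z 0 - z 1 + z 2 - z 3) = z 0 - z 1 by ring,
    hsub k (z 3) (z 2)]
  ring

/-- For every `k ≥ 1`, the polynomial `F_k` is invariant under every element of `W`,
under `ν`, and under `τ` — hence under the group `W̃` generated by them. -/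
theorem Fpoly_invariant (k : ℕ) (hk : 1 ≤ k) :
    (∀ M ∈ SignedPerm, InvUnder M (Fpoly k)) ∧
    InvUnder nuMat (Fpoly k) ∧
    InvUnder tauMat (Fpoly k) ∧
    (∀ g ∈ tildeW, InvUnder (↑g : Matrix (Fin 4) (Fin 4) ℂ) (Fpoly k)) := by
  refine ⟨inv_signed k, inv_nu k, inv_tau k, ?_⟩
  intro g hg
  unfold tildeW at hg
  refine Subgroup.closure_induction
    (p := fun (x : GL (Fin 4) ℂ) _ => InvUnder (↑x : Matrix (Fin 4) (Fin 4) ℂ) (Fpoly k))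
    ?_ ?_ ?_ ?_ hg
  · rintro x (h | h | h)
    · exact inv_signed k _ h
    · rw [h]; exact inv_nu k
    · rw [h]; exact inv_tau k
  · intro z
    rw [Units.val_one, Matrix.one_mulVec]
  · intro x y _ _ hx hy z
    rw [Units.val_mul, ← Matrix.mulVec_mulVec, hx, hy]
  · intro x _ hx z
    have h := hx ((↑x⁻¹ : Matrix (Fin 4) (Fin 4) ℂ).mulVec z)
    rw [Matrix.mulVec_mulVec, ← Units.val_mul, mul_inv_cancel, Units.val_one,
      Matrix.one_mulVec] at h
    exact h.symm
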